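/- Numerical consequence of purity (Herzog–Kühl relations): suppose integers 0 = d_0 < d_1 < ... < d_c and positive rationals β_0 = 1, β_1, ..., β_c satisfy ∑_{i=0}^c (−1)^i β_i d_i^s = 0 for all 0 ≤ s ≤ c−1. Then ∑_{i=0}^c (−1)^i β_i d_i^c = (−1)^c ∏_{i=1}^c d_i. -/
import Mathlib


/-- Herzog–Kühl relations, numerically. If `0 = d_0 < d_1 < … < d_c`
are integers and `β_0 = 1, β_1, …, β_c` are positive rationals with
`∑ (−1)^i β_i d_i^s = 0` for `0 ≤ s ≤ c−1`, then
`∑ (−1)^i β_i d_i^c = (−1)^c ∏_{i=1}^c d_i`. -/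
theorem stmt11 (c : ℕ) (hc : 1 ≤ c) (d : ℕ → ℕ) (β : ℕ → ℚ)
    (hd0 : d 0 = 0) (hdmono : ∀ i < c, d i < d (i + 1))
    (hβpos : ∀ i ≤ c, 0 < β i) (hβ0 : β 0 = 1)
    (hHK : ∀ s < c, ∑ i ∈ Finset.range (c + 1), (-1 : ℚ) ^ i * β i * (d i : ℚ) ^ s = 0) :
    ∑ i ∈ Finset.range (c + 1), (-1 : ℚ) ^ i * β i * (d i : ℚ) ^ c =
      (-1 : ℚ) ^ c * ∏ i ∈ Finset.Icc 1 c, (d i : ℚ) := by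
  classical
  set P : Polynomial ℚ := ∏ i ∈ Finset.Icc 1 c, (Polynomial.X - Polynomial.C (d i : ℚ))
    with hP
  have hmono : P.Monic :=
    Polynomial.monic_prod_of_monic _ _ (fun i _ => Polynomial.monic_X_sub_C _)
  have hdeg : P.natDegree = c := by
    rw [hP, Polynomial.natDegree_prod_of_monic _ _ (fun i _ => Polynomial.monic_X_sub_C _)]
    have h1 : ∀ x ∈ Finset.Icc 1 c, (Polynomial.X - Polynomial.C ((d x : ℚ))).natDegree = 1 :=
      fun x _ => Polynomial.natDegree_X_sub_C _
    rw [Finset.sum_congr rfl h1, Finset.sum_const, Nat.card_Icc, smul_eq_mul, mul_one]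
    omega
  have heval : ∀ x : ℚ, P.eval x = ∑ j ∈ Finset.range (c + 1), P.coeff j * x ^ j := by
    intro x
    exact Polynomial.eval_eq_sum_range' (by omega : P.natDegree < c + 1) x
  -- key identity 1 : the weighted sum of P-values equals the target LHS
  have key1 : ∑ i ∈ Finset.range (c + 1), (-1 : ℚ) ^ i * β i * P.eval ((d i : ℚ))
      = ∑ i ∈ Finset.range (c + 1), (-1 : ℚ) ^ i * β i * (d i : ℚ) ^ c := by
    have : ∑ i ∈ Finset.range (c + 1), (-1 : ℚ) ^ i * β i * P.eval ((d i : ℚ))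
        = ∑ j ∈ Finset.range (c + 1),
            P.coeff j * ∑ i ∈ Finset.range (c + 1), (-1 : ℚ) ^ i * β i * (d i : ℚ) ^ j := by
      simp only [heval]
      simp_rw [Finset.mul_sum]
      rw [Finset.sum_comm]
      apply Finset.sum_congr rfl
      intro j _
      apply Finset.sum_congr rfl
      intro i _
      ring
    rw [this, Finset.sum_range_succ]
    have hzero : ∀ j ∈ Finset.range c,
        P.coeff j * ∑ i ∈ Finset.range (c + 1), (-1 : ℚ) ^ i * β i * (d i : ℚ) ^ j = 0 := by
      intro j hj
      rw [hHK j (Finset.mem_range.mp hj), mul_zero]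
    rw [Finset.sum_eq_zero hzero, zero_add]
    have : P.coeff c = 1 := by
      have := hmono.coeff_natDegree
      rwa [hdeg] at this
    rw [this, one_mul]
  -- key identity 2 : the weighted sum collapses to the i = 0 term
  have hroot : ∀ i, 1 ≤ i → i ≤ c → P.eval ((d i : ℚ)) = 0 := by
    intro i h1 h2
    rw [hP, Polynomial.eval_prod]
    apply Finset.prod_eq_zero (Finset.mem_Icc.mpr ⟨h1, h2⟩)
    simp
  have key2 : ∑ i ∈ Finset.range (c + 1), (-1 : ℚ) ^ i * β i * P.eval ((d i : ℚ))
      = P.eval 0 := by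
    rw [Finset.sum_eq_single_of_mem 0 (by simp)]
    · simp [hβ0, hd0]
    · intro i hi hne
      rw [hroot i (by omega) (by exact Nat.lt_succ_iff.mp (Finset.mem_range.mp hi)), mul_zero]
  have heval0 : P.eval 0 = (-1 : ℚ) ^ c * ∏ i ∈ Finset.Icc 1 c, (d i : ℚ) := by
    rw [hP, Polynomial.eval_prod]
    have : ∀ i ∈ Finset.Icc 1 c,
        Polynomial.eval 0 (Polynomial.X - Polynomial.C (d i : ℚ)) = -1 * (d i : ℚ) := by
      intro i _; simp
    rw [Finset.prod_congr rfl this, Finset.prod_mul_distrib, Finset.prod_const,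
      Nat.card_Icc]
    simp
  rw [← key1, key2, heval0]
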